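/- Let d > n > 0 be integers and let (α_1,…,α_n; β_1,…,β_n) be a tuple of elements of ℤ/dℤ with Σα_i − Σβ_i = d(d−1)/2, with α_i ≠ β_j for all i,j, and with the β_i pairwise distinct. Define complex numbers A_0,…,A_n and B_0,…,B_n by ∏_{j=1}^n (X − e^{2πiα_j/d}) = Σ_j A_j X^j and ∏_{j=1}^n (X − e^{2πiβ_j/d}) = Σ_j B_j X^j, and let A, B be the corresponding companion matrices. Then the matrix u = A^{-1}B satisfies: u − id has rank one, det u = 1 if d is odd, and det u = −1 if d is even. -/

import Mathlib

open Polynomial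

/-- The companion matrix of a monic polynomial of degree `n`:
subdiagonal `1`'s, last column the negatives of the coefficients. -/
noncomputable def companionMatrix (n : ℕ) (p : Polynomial ℂ) : Matrix (Fin n) (Fin n) ℂ :=
  Matrix.of fun i j =>
    if (j : ℕ) = n - 1 then -(p.coeff i) else if (i : ℕ) = (j : ℕ) + 1 then 1 else 0

lemma companionMatrix_det (n : ℕ) (p : Polynomial ℂ) :
    (companionMatrix (n+1) p).det = (-1)^(n+1) * p.coeff 0 := by
  rw [Matrix.det_succ_row_zero, Finset.sum_eq_single (Fin.last n)]
  · have h1 : companionMatrix (n+1) p 0 (Fin.last n) = -(p.coeff 0) := by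
      simp [companionMatrix]
    have h2 : ((companionMatrix (n+1) p).submatrix Fin.succ (Fin.last n).succAbove) = 1 := by
      ext i j
      have hj : (j : ℕ) ≠ (n + 1) - 1 := by omega
      simp only [Matrix.submatrix_apply, Fin.succAbove_last, companionMatrix, Matrix.of_apply,
        Fin.coe_castSucc, Fin.val_succ, Matrix.one_apply, Fin.ext_iff, if_neg hj]
      by_cases h : (i : ℕ) = (j : ℕ) <;> simp [h]
    rw [h1, h2, Matrix.det_one, Fin.val_last]
    ring
  · intro b _ hb
    have hb1 : ¬((b : ℕ) = (n + 1) - 1) := by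
      intro h; exact hb (Fin.val_injective (by simpa using h))
    have hb2 : ¬((0:ℕ) = (b : ℕ) + 1) := by omega
    have : companionMatrix (n+1) p 0 b = 0 := by
      simp only [companionMatrix, Matrix.of_apply, Fin.val_zero]
      rw [if_neg hb1]; simp
    rw [this]; ring
  · intro h; exact absurd (Finset.mem_univ _) h

lemma companionMatrix_det_prod (n : ℕ) (hn : 0 < n) (r : Fin n → ℂ) :
    (companionMatrix n (∏ j, (X - C (r j)))).det = ∏ j, r j := by
  obtain ⟨m, rfl⟩ := Nat.exists_eq_succ_of_ne_zero hn.ne'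
  rw [companionMatrix_det, Polynomial.coeff_zero_eq_eval_zero, Polynomial.eval_prod]
  have : ∀ j : Fin (m+1), ((X - C (r j)).eval 0) = (-1) * r j := by intro j; simp
  rw [Finset.prod_congr rfl (fun j _ => this j), Finset.prod_mul_distrib,
    Finset.prod_const, Finset.card_univ, Fintype.card_fin, ← mul_assoc, ← pow_add,
    Even.neg_one_pow ⟨m+1, by ring⟩, one_mul]

lemma zeta_inj (d : ℕ) (hd : 0 < d) :
    Function.Injective (fun x : ZMod d => Complex.exp (2 * Real.pi * Complex.I * x.val / d)) := by
  haveI : NeZero d := ⟨hd.ne'⟩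
  intro x y h
  simp only [Complex.exp_eq_exp_iff_exists_int] at h
  obtain ⟨k, hk⟩ := h
  have hd' : (d : ℂ) ≠ 0 := Nat.cast_ne_zero.mpr hd.ne'
  have hπ : (2 * (Real.pi:ℂ) * Complex.I) ≠ 0 := by
    simp [Real.pi_ne_zero, Complex.I_ne_zero, Complex.ofReal_ne_zero]
  have h2 : 2 * (Real.pi:ℂ) * Complex.I * ((x.val : ℂ)) =
      2 * (Real.pi:ℂ) * Complex.I * ((y.val : ℂ) + k * d) := by
    field_simp at hk
    linear_combination (2 * (Real.pi:ℂ) * Complex.I) * hk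
  have h3 : ((x.val : ℂ)) = ((y.val:ℤ) + k * d : ℤ) := by
    push_cast
    exact mul_left_cancel₀ hπ h2
  have h4 : (x.val : ℤ) = (y.val:ℤ) + k * d := by exact_mod_cast h3
  have h5 : (d:ℤ) ∣ (x.val:ℤ) - (y.val:ℤ) := ⟨k, by rw [h4]; ring⟩
  have h6 : (x.val:ℤ) - y.val = 0 := by
    refine Int.eq_zero_of_abs_lt_dvd h5 ?_
    have := ZMod.val_lt x
    have := ZMod.val_lt y
    rw [abs_lt]
    constructor <;> [omega; omega]
  exact ZMod.val_injective d (by omega)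

/-- The hypergeometric monodromy element `u = A⁻¹ B` attached to a hypergeometric
parameter is a pseudoreflection, with `det u = 1` for odd `d` and `det u = -1`
for even `d`. -/
theorem hypergeometric_pseudoreflection
    (d n : ℕ) (hn : 0 < n) (hnd : n < d)
    (α β : Fin n → ZMod d)
    (hsum : (∑ i, α i) - (∑ i, β i) = (d.choose 2 : ZMod d))
    (hαβ : ∀ i j, α i ≠ β j)
    (hβ : Function.Injective β) :
    let ζ : ZMod d → ℂ := fun x => Complex.exp (2 * Real.pi * Complex.I * x.val / d)
    let A := companionMatrix n (∏ j, (X - C (ζ (α j))))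
    let B := companionMatrix n (∏ j, (X - C (ζ (β j))))
    let u := A⁻¹ * B
    (u - 1).rank = 1 ∧ (Odd d → u.det = 1) ∧ (Even d → u.det = -1) := by
  obtain ⟨e, rfl⟩ : ∃ e, d = e + 1 := ⟨d - 1, by omega⟩
  intro ζ A B u
  have hd : 0 < e + 1 := Nat.succ_pos e
  haveI : NeZero (e + 1) := ⟨hd.ne'⟩
  have hζdef : ζ = fun x : ZMod (e+1) =>
      Complex.exp (2 * Real.pi * Complex.I * x.val / ((e+1 : ℕ) : ℂ)) := rfl
  have hζ0 : ∀ x : ZMod (e+1), ζ x ≠ 0 := fun x => Complex.exp_ne_zero _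
  have hζinj : Function.Injective ζ := by rw [hζdef]; exact_mod_cast zeta_inj (e+1) hd
  have hA : A = companionMatrix n (∏ j, (X - C (ζ (α j)))) := rfl
  have hB : B = companionMatrix n (∏ j, (X - C (ζ (β j)))) := rfl
  have hu : u = A⁻¹ * B := rfl
  have hdetA : A.det = ∏ j, ζ (α j) := companionMatrix_det_prod n hn _
  have hdetB : B.det = ∏ j, ζ (β j) := companionMatrix_det_prod n hn _
  have hAunit : IsUnit A.det := by
    rw [hdetA]
    exact (Finset.prod_ne_zero_iff.mpr (fun j _ => hζ0 (α j))).isUnit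
  have hdetu : u.det = ((-1 : ℂ)^e)⁻¹ := by
    classical
    set a : ℕ := ∑ i, (α i).val with ha_def
    set b : ℕ := ∑ i, (β i).val with hb_def
    have hcastα : ((a : ZMod (e+1))) = ∑ i, α i := by
      rw [ha_def, Nat.cast_sum]
      exact Finset.sum_congr rfl fun i _ => by
        rw [ZMod.natCast_val, ZMod.cast_id]
    have hcastβ : ((b : ZMod (e+1))) = ∑ i, β i := by
      rw [hb_def, Nat.cast_sum]
      exact Finset.sum_congr rfl fun i _ => by
        rw [ZMod.natCast_val, ZMod.cast_id]
    have hz : ((((a:ℤ) - b - ((e+1).choose 2 : ℕ)) : ℤ) : ZMod (e+1)) = 0 := by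
      push_cast
      rw [hcastα, hcastβ, hsum]
      ring
    obtain ⟨k, hk⟩ := (ZMod.intCast_zmod_eq_zero_iff_dvd _ _).mp hz
    have hc2 : 2 * ((e+1).choose 2) = (e+1) * e := by
      rw [Nat.choose_two_right, Nat.succ_sub_one, Nat.mul_div_cancel']
      have : Even ((e+1) * e) := by rw [mul_comm]; exact Nat.even_mul_succ_self e
      exact this.two_dvd
    have hD : (((e+1:ℕ)) : ℂ) ≠ 0 := Nat.cast_ne_zero.mpr hd.ne'
    have hkC : (a:ℂ) - b - (((e+1).choose 2 : ℕ) : ℂ) = (((e+1):ℕ):ℂ) * k := by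
      exact_mod_cast congrArg (fun z : ℤ => (z : ℂ)) hk
    have hc2C : 2 * ((((e+1).choose 2) : ℕ):ℂ) = (((e+1):ℕ):ℂ) * e := by
      exact_mod_cast congrArg (fun z : ℕ => (z : ℂ)) hc2
    have hsumα : ∑ j, (2 * (Real.pi:ℂ) * Complex.I * ((α j).val : ℂ) / ((e+1:ℕ):ℂ))
        = 2 * (Real.pi:ℂ) * Complex.I * (a : ℂ) / ((e+1:ℕ):ℂ) := by
      rw [← Finset.sum_div, ← Finset.mul_sum, ha_def]
      push_cast
      ring
    have hsumβ : ∑ j, (2 * (Real.pi:ℂ) * Complex.I * ((β j).val : ℂ) / ((e+1:ℕ):ℂ))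
        = 2 * (Real.pi:ℂ) * Complex.I * (b : ℂ) / ((e+1:ℕ):ℂ) := by
      rw [← Finset.sum_div, ← Finset.mul_sum, hb_def]
      push_cast
      ring
    have hexp : -(2 * (Real.pi:ℂ) * Complex.I * (a : ℂ) / ((e+1:ℕ):ℂ))
          + 2 * (Real.pi:ℂ) * Complex.I * (b : ℂ) / ((e+1:ℕ):ℂ)
        = ((-(e:ℤ) : ℤ) : ℂ) * ((Real.pi:ℂ) * Complex.I)
          + ((-k : ℤ) : ℂ) * (2 * (Real.pi:ℂ) * Complex.I) := by
      push_cast at hkC hc2C ⊢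
      have hD' : ((e:ℂ) + 1) ≠ 0 := by
        have := hD; push_cast at this; exact this
      linear_combination (norm := skip) (-(2 * (Real.pi:ℂ) * Complex.I / ((e:ℂ)+1))) * hkC - (Real.pi:ℂ) * Complex.I / ((e:ℂ)+1) * hc2C
      field_simp
      ring
    rw [hu, Matrix.det_mul, Matrix.det_nonsing_inv, Ring.inverse_eq_inv, hdetA, hdetB, hζdef]
    simp only
    rw [← Complex.exp_sum, ← Complex.exp_sum, ← Complex.exp_neg, ← Complex.exp_add,
      hsumα, hsumβ, hexp, Complex.exp_add, Complex.exp_int_mul, Complex.exp_int_mul,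
      Complex.exp_pi_mul_I]
    rw [show Complex.exp (2 * (Real.pi:ℂ) * Complex.I) = 1 by
      simpa using Complex.exp_int_mul_two_pi_mul_I 1]
    simp [zpow_neg, zpow_natCast]
  refine ⟨?_, ?_, ?_⟩
  · classical
    have hmon : ∀ r : Fin n → ℂ, (∏ j, (X - C (r j))).Monic :=
      fun r => monic_prod_of_monic _ _ fun j _ => monic_X_sub_C _
    have hdegp : ∀ r : Fin n → ℂ, (∏ j, (X - C (r j))).natDegree = n := by
      intro r
      rw [Polynomial.natDegree_prod _ _ (fun j _ => X_sub_C_ne_zero _)]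
      simp [Polynomial.natDegree_X_sub_C]
    have hpβz : (∏ j, (X - C (ζ (β j)))).eval (ζ (β ⟨0, hn⟩)) = 0 := by
      rw [Polynomial.eval_prod]
      exact Finset.prod_eq_zero (Finset.mem_univ (⟨0, hn⟩ : Fin n)) (by simp)
    have hpαz : (∏ j, (X - C (ζ (α j)))).eval (ζ (β ⟨0, hn⟩)) ≠ 0 := by
      rw [Polynomial.eval_prod]
      refine Finset.prod_ne_zero_iff.mpr fun j _ => ?_
      simp only [Polynomial.eval_sub, Polynomial.eval_X, Polynomial.eval_C]
      exact sub_ne_zero.mpr fun h => hαβ j ⟨0, hn⟩ (hζinj h.symm)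
    have hne : (∏ j, (X - C (ζ (α j)))) ≠ (∏ j, (X - C (ζ (β j)))) :=
      fun h => hpαz (by rw [h, hpβz])
    set q : Polynomial ℂ := (∏ j, (X - C (ζ (α j)))) - (∏ j, (X - C (ζ (β j)))) with hqdef
    have hq0 : q ≠ 0 := sub_ne_zero.mpr hne
    have hqlt : q.natDegree < n := by
      rw [Polynomial.natDegree_lt_iff_degree_lt hq0]
      have h1 : (∏ j, (X - C (ζ (α j)))).degree = (n : WithBot ℕ) := by
        rw [Polynomial.degree_eq_natDegree (hmon _).ne_zero, hdegp]
      have h2 : (∏ j, (X - C (ζ (β j)))).degree = (n : WithBot ℕ) := by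
        rw [Polynomial.degree_eq_natDegree (hmon _).ne_zero, hdegp]
      have := Polynomial.degree_sub_lt (h1.trans h2.symm) (hmon _).ne_zero
        (((hmon (fun j => ζ (α j))).leadingCoeff).trans ((hmon (fun j => ζ (β j))).leadingCoeff).symm)
      rw [h1] at this
      exact this
    set w : Fin n → ℂ := fun i => q.coeff i with hwdef
    set v : Fin n → ℂ := fun j => if (j : ℕ) = n - 1 then 1 else 0 with hvdef
    have hBA : B - A = Matrix.vecMulVec w v := by
      ext i j
      rw [Matrix.sub_apply, hB, hA, Matrix.vecMulVec_apply, hwdef, hvdef]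
      simp only [companionMatrix, Matrix.of_apply, hqdef, Polynomial.coeff_sub]
      by_cases hj : (j : ℕ) = n - 1 <;> simp [hj] <;> ring
    have hu1 : u - 1 = A⁻¹ * (B - A) := by
      rw [hu, Matrix.mul_sub, Matrix.nonsing_inv_mul A hAunit]
    have hrankeq : (u - 1).rank = (B - A).rank := by
      rw [hu1]
      exact Matrix.rank_mul_eq_right_of_isUnit_det _ _ (Matrix.isUnit_nonsing_inv_det A hAunit)
    have hle : (B - A).rank ≤ 1 := by
      rw [hBA, Matrix.vecMulVec_eq (Fin 1)]
      exact (Matrix.rank_mul_le_right _ _).trans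
        (by simpa using Matrix.rank_le_card_height (Matrix.replicateRow (Fin 1) v))
    have hw0 : w ≠ 0 := by
      intro h
      have h1 := congrFun h ⟨q.natDegree, hqlt⟩
      simp only [hwdef, Pi.zero_apply] at h1
      exact (mt Polynomial.leadingCoeff_eq_zero.mp hq0) h1
    have hmem : w ∈ LinearMap.range (B - A).mulVecLin := by
      refine ⟨Pi.single (⟨n - 1, by omega⟩ : Fin n) 1, ?_⟩
      rw [Matrix.mulVecLin_apply, Matrix.mulVec_single]
      funext i
      rw [hBA]
      simp [Matrix.vecMulVec_apply, hvdef]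
    have hne0 : (B - A).rank ≠ 0 := by
      intro h
      rw [Matrix.rank, Submodule.finrank_eq_zero] at h
      rw [h] at hmem
      exact hw0 (by simpa using hmem)
    rw [hrankeq]
    omega
  · intro hodd
    have he : Even e := Nat.not_odd_iff_even.mp (Nat.odd_add_one.mp hodd)
    rw [hdetu, he.neg_one_pow, inv_one]
  · intro heven
    have he : Odd e := Nat.not_even_iff_odd.mp (Nat.even_add_one.mp heven)
    rw [hdetu, he.neg_one_pow]
    norm_num
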